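/- Let ω₁(x,y) = x²·cos y − y·sin y + y²·sin x + x·cos x and ω₂(x,y) = 4(y·cos x + x·sin y). Define Q(x,y) = −x⁴ − y⁴ − 4x²y·sin x·sin y + x²(−8·cos y·sin x − 2·sin²y − 1) + 4xy²·cos x·cos y − 16xy·cos x·sin y + 2x·cos x·(−8·cos y − sin x) + y²(−8·cos y·sin x + 2·sin²x − 3) + 2y·sin y·(cos y + 8·sin x) + 16·cos y·sin x + sin²x − sin²y + 4C + 1. Then there exists C₀ > 0 such that for all C ≤ −C₀, Q(x,y) ≠ 0 for all (x,y) ∈ ℝ². -/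
import Mathlib


noncomputable def Q (C x y : ℝ) : ℝ :=
  -x ^ 4 - y ^ 4 - 4 * x ^ 2 * y * Real.sin x * Real.sin y
  + x ^ 2 * (-8 * Real.cos y * Real.sin x - 2 * (Real.sin y) ^ 2 - 1)
  + 4 * x * y ^ 2 * Real.cos x * Real.cos y
  - 16 * x * y * Real.cos x * Real.sin y
  + 2 * x * Real.cos x * (-8 * Real.cos y - Real.sin x)
  + y ^ 2 * (-8 * Real.cos y * Real.sin x + 2 * (Real.sin x) ^ 2 - 3)
  + 2 * y * Real.sin y * (Real.cos y + 8 * Real.sin x)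
  + 16 * Real.cos y * Real.sin x + (Real.sin x) ^ 2 - (Real.sin y) ^ 2
  + 4 * C + 1

private lemma mul_le_abs_mul (u v c : ℝ) (hv : |v| ≤ c) : u * v ≤ |u| * c := by
  calc u * v ≤ |u * v| := le_abs_self _
    _ = |u| * |v| := abs_mul u v
    _ ≤ |u| * c := by exact mul_le_mul_of_nonneg_left hv (abs_nonneg u)

private lemma poly_bound (a b : ℝ) (ha : 0 ≤ a) (hb : 0 ≤ b) :
    -a ^ 4 - b ^ 4 + 4 * a ^ 2 * b + 11 * a ^ 2 + 4 * a * b ^ 2 + 16 * a * b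
      + 18 * a + 13 * b ^ 2 + 18 * b + 18 ≤ 2000 := by
  nlinarith [sq_nonneg (a ^ 2 - 4 * b), sq_nonneg (b ^ 2 - 4 * a), sq_nonneg (a - b),
    sq_nonneg (a ^ 2 - 10), sq_nonneg (b ^ 2 - 10), sq_nonneg a, sq_nonneg b,
    sq_nonneg (a - 5), sq_nonneg (b - 5), mul_nonneg ha hb,
    mul_nonneg (mul_nonneg ha ha) hb, mul_nonneg ha (mul_nonneg hb hb)]

set_option maxHeartbeats 1000000 in
theorem Q_nonvanishing :
    ∃ C₀ : ℝ, 0 < C₀ ∧ ∀ C ≤ -C₀, ∀ x y : ℝ, Q C x y ≠ 0 := by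
  refine ⟨501, by norm_num, fun C hC x y => ?_⟩
  have hsx : |Real.sin x| ≤ 1 := abs_le.mpr ⟨Real.neg_one_le_sin x, Real.sin_le_one x⟩
  have hcx : |Real.cos x| ≤ 1 := abs_le.mpr ⟨Real.neg_one_le_cos x, Real.cos_le_one x⟩
  have hsy : |Real.sin y| ≤ 1 := abs_le.mpr ⟨Real.neg_one_le_sin y, Real.sin_le_one y⟩
  have hcy : |Real.cos y| ≤ 1 := abs_le.mpr ⟨Real.neg_one_le_cos y, Real.cos_le_one y⟩
  set sx := Real.sin x with hsx'
  set cx := Real.cos x with hcx'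
  set sy := Real.sin y with hsy'
  set cy := Real.cos y with hcy'
  have hsx1 := abs_le.mp hsx
  have hcx1 := abs_le.mp hcx
  have hsy1 := abs_le.mp hsy
  have hcy1 := abs_le.mp hcy
  have h1 : (-4 * x ^ 2 * y) * (sx * sy) ≤ |(-4 * x ^ 2 * y)| * 1 :=
    mul_le_abs_mul _ _ _ (by rw [abs_mul]; exact mul_le_one₀ hsx (abs_nonneg _) hsy)
  have h2 : x ^ 2 * (-8 * cy * sx - 2 * sy ^ 2 - 1) ≤ |x ^ 2| * 11 :=
    mul_le_abs_mul _ _ _ (by rw [abs_le]; constructor <;> nlinarith [sq_nonneg sy])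
  have h3 : (4 * x * y ^ 2) * (cx * cy) ≤ |4 * x * y ^ 2| * 1 :=
    mul_le_abs_mul _ _ _ (by rw [abs_mul]; exact mul_le_one₀ hcx (abs_nonneg _) hcy)
  have h4 : (-16 * x * y) * (cx * sy) ≤ |(-16 * x * y)| * 1 :=
    mul_le_abs_mul _ _ _ (by rw [abs_mul]; exact mul_le_one₀ hcx (abs_nonneg _) hsy)
  have h5 : (2 * x) * (cx * (-8 * cy - sx)) ≤ |2 * x| * 9 :=
    mul_le_abs_mul _ _ _ (by rw [abs_le]; constructor <;> nlinarith)
  have h6 : y ^ 2 * (-8 * cy * sx + 2 * sx ^ 2 - 3) ≤ |y ^ 2| * 13 :=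
    mul_le_abs_mul _ _ _ (by rw [abs_le]; constructor <;> nlinarith [sq_nonneg sx])
  have h9 : |cy + 8 * sx| ≤ 9 := by
    calc |cy + 8 * sx| ≤ |cy| + |8 * sx| := abs_add_le _ _
      _ = |cy| + 8 * |sx| := by rw [abs_mul]; norm_num
      _ ≤ 1 + 8 * 1 := by
          have := mul_le_mul_of_nonneg_left hsx (by norm_num : (0:ℝ) ≤ 8)
          linarith
      _ = 9 := by norm_num
  have h7 : (2 * y) * (sy * (cy + 8 * sx)) ≤ |2 * y| * 9 := by
    refine mul_le_abs_mul _ _ _ ?_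
    calc |sy * (cy + 8 * sx)| = |sy| * |cy + 8 * sx| := abs_mul _ _
      _ ≤ 1 * 9 := mul_le_mul hsy h9 (abs_nonneg _) zero_le_one
      _ = 9 := by norm_num
  have h8 : (16 : ℝ) * (cy * sx) ≤ |(16 : ℝ)| * 1 :=
    mul_le_abs_mul _ _ _ (by rw [abs_mul]; exact mul_le_one₀ hcy (abs_nonneg _) hsx)
  have hax : |x| ^ 2 = x ^ 2 := sq_abs x
  have hay : |y| ^ 2 = y ^ 2 := sq_abs y
  have hax4 : |x| ^ 4 = x ^ 4 := by
    rw [show (4:ℕ) = 2 * 2 by rfl, pow_mul, pow_mul, hax]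
  have hay4 : |y| ^ 4 = y ^ 4 := by
    rw [show (4:ℕ) = 2 * 2 by rfl, pow_mul, pow_mul, hay]
  have habs1 : |(-4 * x ^ 2 * y)| = 4 * |x| ^ 2 * |y| := by
    rw [abs_mul, abs_mul]; rw [hax]; norm_num
  have habs2 : |x ^ 2| = |x| ^ 2 := by rw [abs_pow]
  have habs3 : |4 * x * y ^ 2| = 4 * |x| * |y| ^ 2 := by
    rw [abs_mul, abs_mul, abs_pow]; norm_num
  have habs4 : |(-16 * x * y)| = 16 * |x| * |y| := by
    rw [abs_mul, abs_mul]; norm_num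
  have habs5 : |2 * x| = 2 * |x| := by rw [abs_mul]; norm_num
  have habs6 : |y ^ 2| = |y| ^ 2 := by rw [abs_pow]
  have habs7 : |2 * y| = 2 * |y| := by rw [abs_mul]; norm_num
  have hQle : Q C x y ≤ -|x| ^ 4 - |y| ^ 4 + 4 * |x| ^ 2 * |y| + 11 * |x| ^ 2
      + 4 * |x| * |y| ^ 2 + 16 * |x| * |y| + 18 * |x| + 13 * |y| ^ 2 + 18 * |y| + 18 + 4 * C := by
    have hsx2 : sx ^ 2 ≤ 1 := by
      rw [← sq_abs]; exact pow_le_one₀ (abs_nonneg sx) hsx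
    have hsy2 : (0:ℝ) ≤ sy ^ 2 := sq_nonneg sy
    rw [Q, hax4, hay4]
    rw [← hsx', ← hcx', ← hsy', ← hcy']
    rw [habs1] at h1; rw [habs2] at h2; rw [habs3] at h3; rw [habs4] at h4
    rw [habs5] at h5; rw [habs6] at h6; rw [habs7] at h7
    norm_num at h8
    linarith [h1, h2, h3, h4, h5, h6, h7, h8]
  have hpoly := poly_bound |x| |y| (abs_nonneg x) (abs_nonneg y)
  have : Q C x y ≤ 2000 + 4 * C := by linarith
  have : Q C x y < 0 := by linarith
  exact ne_of_lt this
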